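/- arXiv:1910.11232 — 5 statements merged into one kernel-verified Lean document; each statement's English description precedes it below -/
import Mathlib

section
/- For any type of states S, any transition relation R : S → S → Prop, any postcondition P : S → Prop, and any state σ : S, one has box R* P σ ↔ (P σ ∧ box R* (fun τ => P τ → box R P τ) σ), where R* denotes the reflexive transitive closure of R. (Semantic validity of the dL loop induction axiom I: [α*]φ ↔ φ ∧ [α*](φ → [α]φ).) -/
def box {S : Type*} (R : S → S → Prop) (P : S → Prop) (σ : S) : Prop :=
  ∀ τ, R σ τ → P τ

theorem dl_induction_axiom {S : Type*} (R : S → S → Prop) (P : S → Prop) (σ : S) :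
    box (Relation.ReflTransGen R) P σ ↔
      (P σ ∧ box (Relation.ReflTransGen R) (fun τ => P τ → box R P τ) σ) := by
  constructor
  · intro h
    refine ⟨h σ .refl, fun τ hτ _ ρ hρ => h ρ (hτ.tail hρ)⟩
  · rintro ⟨hP, h⟩ τ hτ
    induction hτ with
    | refl => exact hP
    | tail hab hbc ih => exact h _ hab ih _ hbc
end

section
/- Let E be a real Banach space, F : E → E a Lipschitz map (with some Lipschitz constant K), x₀ : E, and y : ℝ → E a global solution of the ODE with y 0 = x₀ and HasDerivAt y (F (y t)) t for all t : ℝ. Then for every predicate P : E → Prop: [∀ T ≥ 0, for every function φ : ℝ → E with φ 0 = x₀ and HasDerivAt φ (F (φ t)) t for all t ∈ [0, T], P (φ T) holds] if and only if [∀ t ≥ 0, P (y t)]. (Semantic soundness of the dL solution axiom ['] for differential equations: [x'=f(x)]p(x) ↔ ∀t≥0 [x:=y(t)]p(x), using uniqueness of solutions of Lipschitz ODEs.) -/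
theorem dl_solution_axiom {E : Type*} [NormedAddCommGroup E] [NormedSpace ℝ E]
    [CompleteSpace E] (F : E → E) (K : NNReal) (hF : LipschitzWith K F)
    (x₀ : E) (y : ℝ → E) (hy0 : y 0 = x₀)
    (hy : ∀ t : ℝ, HasDerivAt y (F (y t)) t) (P : E → Prop) :
    (∀ T : ℝ, 0 ≤ T → ∀ φ : ℝ → E, φ 0 = x₀ →
        (∀ t ∈ Set.Icc (0 : ℝ) T, HasDerivAt φ (F (φ t)) t) → P (φ T)) ↔
    (∀ t : ℝ, 0 ≤ t → P (y t)) := by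
  constructor
  · intro h t ht
    exact h t ht y hy0 (fun s _ => hy s)
  · intro h T hT φ hφ0 hφ
    have heq : Set.EqOn φ y (Set.Icc 0 T) := by
      apply ODE_solution_unique (v := fun _ x => F x) (fun _ => hF)
      · exact fun s hs => ((hφ s hs).continuousAt).continuousWithinAt
      · exact fun s hs => ((hφ s ⟨hs.1, hs.2.le⟩).hasDerivWithinAt)
      · exact fun s _ => ((hy s).continuousAt).continuousWithinAt
      · exact fun s _ => (hy s).hasDerivWithinAt
      · rw [hφ0, hy0]
    rw [heq (Set.right_mem_Icc.2 hT)]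
    exact h T hT
end

section
/- Let E be a real Banach space, F : E → E, Q a subset of E, and e, ẽ : E → ℝ differentiable functions such that for every y ∈ Q, the derivative of e at y in the direction F y equals the derivative of ẽ at y in the direction F y (i.e., fderiv ℝ e y (F y) = fderiv ℝ ẽ y (F y)). Then for every T ≥ 0 and every function φ : ℝ → E with HasDerivAt φ (F (φ t)) t and φ t ∈ Q for all t ∈ [0, T], if e (φ 0) = ẽ (φ 0) then e (φ T) = ẽ (φ T). (Semantic soundness of the dL differential invariant proof rule dI for equational postconditions: if Q implies (e)' = (ẽ)' after substituting x' = f(x), then e = ẽ is an invariant of x' = f(x) & Q.) -/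
theorem dl_differential_invariant {E : Type*} [NormedAddCommGroup E] [NormedSpace ℝ E]
    [CompleteSpace E] (F : E → E) (Q : Set E) (e e₂ : E → ℝ)
    (he : Differentiable ℝ e) (he₂ : Differentiable ℝ e₂)
    (hder : ∀ y ∈ Q, fderiv ℝ e y (F y) = fderiv ℝ e₂ y (F y))
    (T : ℝ) (hT : 0 ≤ T) (φ : ℝ → E)
    (hφ : ∀ t ∈ Set.Icc (0 : ℝ) T, HasDerivAt φ (F (φ t)) t)
    (hQ : ∀ t ∈ Set.Icc (0 : ℝ) T, φ t ∈ Q)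
    (h0 : e (φ 0) = e₂ (φ 0)) :
    e (φ T) = e₂ (φ T) := by
  set g : ℝ → ℝ := fun t => e (φ t) - e₂ (φ t) with hg
  have hgd : ∀ t ∈ Set.Icc (0 : ℝ) T, HasDerivAt g 0 t := by
    intro t ht
    have h1 : HasDerivAt (fun t => e (φ t)) (fderiv ℝ e (φ t) (F (φ t))) t :=
      (he.differentiableAt.hasFDerivAt.comp_hasDerivAt t (hφ t ht))
    have h2 : HasDerivAt (fun t => e₂ (φ t)) (fderiv ℝ e₂ (φ t) (F (φ t))) t :=
      (he₂.differentiableAt.hasFDerivAt.comp_hasDerivAt t (hφ t ht))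
    have := h1.sub h2
    rwa [hder _ (hQ t ht), sub_self] at this
  have hcont : ContinuousOn g (Set.Icc 0 T) := fun t ht =>
    ((hgd t ht).continuousAt).continuousWithinAt
  have := constant_of_has_deriv_right_zero hcont
    (fun x hx => ((hgd x (Set.mem_Icc_of_Ico hx)).hasDerivWithinAt))
    T (Set.right_mem_Icc.2 hT)
  have h0' : g 0 = 0 := by simp [hg, h0]
  have : g T = 0 := by rw [this, h0']
  simpa [hg, sub_eq_zero] using this
end

section
/- Fix reals g > 0 and H. If 0 ≤ x₀, x₀ = H, v₀ = 0, and (x, v) is reachable from (x₀, v₀) by the reflexive transitive closure of the bouncing-ball step relation, then 0 ≤ x and x ≤ H. (Validity of the bouncing-ball safety formula: 0≤x ∧ x=H ∧ v=0 ∧ g>0 ∧ c=1 → [({x'=v, v'=−g & x≥0}; (?x=0; v:=−cv ∪ ?x≠0))*](0≤x ∧ x≤H).) -/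
/-- One iteration of the bouncing-ball loop body with damping coefficient `c = 1`:
follow `x' = v, v' = -g & x ≥ 0` for time `t`, then run `?x=0; v:=-v ∪ ?x≠0`. -/
def bbStep (g : ℝ) : ℝ × ℝ → ℝ × ℝ → Prop := fun (x, v) (x', v') =>
  ∃ t : ℝ, 0 ≤ t ∧ (∀ s ∈ Set.Icc (0 : ℝ) t, x + v * s - (g / 2) * s ^ 2 ≥ 0) ∧
    ((x + v * t - (g / 2) * t ^ 2 = 0 ∧ x' = x + v * t - (g / 2) * t ^ 2 ∧
        v' = -(v - g * t)) ∨
     (x + v * t - (g / 2) * t ^ 2 ≠ 0 ∧ x' = x + v * t - (g / 2) * t ^ 2 ∧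
        v' = v - g * t))

theorem bouncing_ball_safety (g H : ℝ) (hg : g > 0) (x₀ v₀ x v : ℝ)
    (hx₀ : 0 ≤ x₀) (hH : x₀ = H) (hv₀ : v₀ = 0)
    (hreach : Relation.ReflTransGen (bbStep g) (x₀, v₀) (x, v)) :
    0 ≤ x ∧ x ≤ H := by
  have key : ∀ p : ℝ × ℝ, Relation.ReflTransGen (bbStep g) (x₀, v₀) p →
      0 ≤ p.1 ∧ p.2 ^ 2 + 2 * g * p.1 = 2 * g * H := by
    intro p hp
    induction hp with
    | refl => simp [hv₀, hH]; subst hH; exact hx₀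
    | @tail b c hab hbc ih =>
      obtain ⟨b1, b2⟩ := b
      obtain ⟨c1, c2⟩ := c
      obtain ⟨hb1, hE⟩ := ih
      obtain ⟨t, ht, hdom, hcase⟩ := hbc
      have hx' : b1 + b2 * t - (g / 2) * t ^ 2 ≥ 0 :=
        hdom t ⟨ht, le_refl t⟩
      rcases hcase with ⟨_, hc1, hc2⟩ | ⟨_, hc1, hc2⟩ <;>
        subst hc1 <;> subst hc2 <;> constructor <;> simp at * <;> nlinarith
  obtain ⟨h1, h2⟩ := key (x, v) hreach
  refine ⟨h1, ?_⟩
  simp at h1 h2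
  nlinarith [sq_nonneg v]
end

section
/- Fix a real g > 0. For all reals x, v, x⁺, v⁺: (x, v) step (x⁺, v⁺) if and only if 2·g·(x⁺ − x) = v² − (v⁺)² ∧ x ≥ 0 ∧ ((x⁺ > 0 ∧ v⁺ ≤ v) ∨ (x⁺ = 0 ∧ v⁺ ≥ −v)). (Correctness of the ModelPlex model monitor for the bouncing ball: the monitor formula exactly characterizes the transitions of one iteration of the bouncing-ball loop body.) -/
lemma parab_nonneg (g x v t : ℝ) (hg : 0 < g) (hx : 0 ≤ x)
    (hpt : x + v * t - (g / 2) * t ^ 2 ≥ 0) :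
    ∀ s ∈ Set.Icc (0 : ℝ) t, x + v * s - (g / 2) * s ^ 2 ≥ 0 := by
  intro s hs
  obtain ⟨hs0, hst⟩ := hs
  rcases eq_or_lt_of_le hs0 with h | h
  · subst h; simpa using hx
  · nlinarith [mul_nonneg h.le hpt, mul_nonneg (sub_nonneg.2 hst) hx,
      mul_nonneg hg.le (mul_nonneg h.le (sub_nonneg.2 hst)),
      mul_nonneg (sub_nonneg.2 hst) (mul_nonneg h.le h.le)]

theorem bouncing_ball_model_monitor (g : ℝ) (hg : g > 0) (x v x' v' : ℝ) :
    bbStep g (x, v) (x', v') ↔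
      (2 * g * (x' - x) = v ^ 2 - v' ^ 2 ∧ x ≥ 0 ∧
        ((x' > 0 ∧ v' ≤ v) ∨ (x' = 0 ∧ v' ≥ -v))) := by
  constructor
  · rintro ⟨t, ht, hinv, hcase⟩
    have hx : x ≥ 0 := by simpa using hinv 0 ⟨le_refl 0, ht⟩
    have hpt : x + v * t - (g / 2) * t ^ 2 ≥ 0 := hinv t ⟨ht, le_refl t⟩
    rcases hcase with ⟨h0, hx', hv'⟩ | ⟨h0, hx', hv'⟩
    · refine ⟨by rw [hx', hv']; ring, hx, Or.inr ⟨by rw [hx', h0], ?_⟩⟩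
      rw [hv']; nlinarith [mul_nonneg hg.le ht]
    · refine ⟨by rw [hx', hv']; ring, hx, Or.inl ⟨?_, ?_⟩⟩
      · rw [hx']; exact lt_of_le_of_ne hpt (Ne.symm h0)
      · rw [hv']; nlinarith [mul_nonneg hg.le ht]
  · rintro ⟨hE, hx, ⟨hx', hv⟩ | ⟨hx', hv⟩⟩
    · have ht : 0 ≤ (v - v') / g := div_nonneg (by linarith) hg.le
      have hpt : x + v * ((v - v') / g) - (g / 2) * ((v - v') / g) ^ 2 = x' := by
        field_simp
        nlinarith [hE]
      exact ⟨(v - v') / g, ht, parab_nonneg g x v _ hg hx (by rw [hpt]; exact hx'.le),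
        Or.inr ⟨by rw [hpt]; exact ne_of_gt hx', by rw [hpt], by field_simp; ring⟩⟩
    · have ht : 0 ≤ (v + v') / g := div_nonneg (by linarith) hg.le
      have hpt : x + v * ((v + v') / g) - (g / 2) * ((v + v') / g) ^ 2 = x' := by
        field_simp
        nlinarith [hE]
      exact ⟨(v + v') / g, ht, parab_nonneg g x v _ hg hx (by rw [hpt, hx']),
        Or.inl ⟨by rw [hpt, hx'], by rw [hpt], by field_simp; ring⟩⟩
end
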